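/- Let (F_n)_{n≥0} be a filtration on a probability space, let (ε_n)_{n≥1} be a square-integrable adapted real-valued process with E[ε_n | F_{n−1}] = 0 almost surely and sup_n E[ε_n² | F_{n−1}] < ∞ almost surely, and let each v_n be a real F_{n−1}-measurable random variable. Write S_n = Σ_{i=1}^n v_i·ε_i and V_n = Σ_{i=1}^n v_i². Then: (i) almost surely on the event { Σ_{i=1}^∞ v_i² < ∞ }, the sequence (S_n) converges to a finite limit; and (ii) for every η > 1/2, almost surely on the event { Σ_{i=1}^∞ v_i² = ∞ }, S_n / ( V_n^{1/2}·(log V_n)^η ) → 0 as n → ∞. -/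

import Mathlib

open MeasureTheory Filter
open scoped ENNReal NNReal


open MeasureTheory Filter

/-- elementary: for `0 < a ≤ b`, `(b-a)/b ≤ log b - log a`. -/
lemma lw_log_lb {a b : ℝ} (ha : 0 < a) (hab : a ≤ b) :
    (b - a) / b ≤ Real.log b - Real.log a := by
  have hb : 0 < b := lt_of_lt_of_le ha hab
  have h := Real.log_le_sub_one_of_pos (div_pos ha hb)
  rw [Real.log_div ha.ne' hb.ne'] at h
  have : (b - a) / b = 1 - a / b := by field_simp
  linarith

/-- elementary telescoping bound: for `s > 1`, `1 ≤ u ≤ t`,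
`(t-u)/t^s ≤ (u^(1-s) - t^(1-s))/(s-1)`. -/
lemma lw_rpow_telescope {s u t : ℝ} (hs : 1 < s) (hu : 1 ≤ u) (hut : u ≤ t) :
    (t - u) / t ^ s ≤ (u ^ (1 - s) - t ^ (1 - s)) / (s - 1) := by
  have hupos : (0:ℝ) < u := lt_of_lt_of_le one_pos hu
  have htpos : (0:ℝ) < t := lt_of_lt_of_le hupos hut
  have hlog : 1 - u / t ≤ Real.log t - Real.log u := by
    have h1 := lw_log_lb hupos hut
    have ht : (t - u) / t = 1 - u / t := by field_simp
    linarith [ht ▸ h1]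
  have hdivpos : (0:ℝ) < t / u := div_pos htpos hupos
  have h2 : 1 + (s - 1) * (1 - u / t) ≤ (t / u) ^ (s - 1) := by
    rw [Real.rpow_def_of_pos hdivpos]
    have hl : Real.log (t / u) = Real.log t - Real.log u := Real.log_div htpos.ne' hupos.ne'
    calc 1 + (s - 1) * (1 - u / t) ≤ 1 + (s-1) * (Real.log t - Real.log u) := by
          have h0 : (0:ℝ) ≤ s - 1 := by linarith
          nlinarith
      _ = Real.log (t / u) * (s - 1) + 1 := by rw [hl]; ring
      _ ≤ Real.exp (Real.log (t / u) * (s - 1)) := Real.add_one_le_exp _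
  have hu1 : u ^ (s-1) ≠ 0 := (Real.rpow_pos_of_pos hupos _).ne'
  have key : t ^ (1 - s) * (t / u) ^ (s - 1) = u ^ (1 - s) := by
    rw [Real.div_rpow htpos.le hupos.le, ← mul_div_assoc, div_eq_iff hu1,
      ← Real.rpow_add htpos, ← Real.rpow_add hupos]
    norm_num
  have h3 : t ^ (1 - s) * (1 + (s - 1) * (1 - u / t)) ≤ u ^ (1 - s) := by
    calc t ^ (1 - s) * (1 + (s - 1) * (1 - u / t)) ≤ t ^ (1 - s) * (t / u) ^ (s - 1) :=
          mul_le_mul_of_nonneg_left h2 (Real.rpow_nonneg htpos.le _)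
      _ = u ^ (1 - s) := key
  have hts : (0:ℝ) < t ^ s := Real.rpow_pos_of_pos htpos s
  have hkey2 : t ^ (1 - s) * t ^ s = t := by
    rw [← Real.rpow_add htpos]
    norm_num
  have h5 : t * (1 + (s-1)*(1-u/t)) = t + (s-1)*(t-u) := by field_simp
  have h7 : t + (s-1)*(t-u) ≤ u^(1-s) * t^s := by
    have h6 := mul_le_mul_of_nonneg_right h3 hts.le
    calc t + (s-1)*(t-u) = (t^(1-s) * t^s) * (1 + (s-1)*(1-u/t)) := by rw [hkey2, h5]
      _ = t^(1-s) * (1+(s-1)*(1-u/t)) * t^s := by ring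
      _ ≤ u^(1-s) * t^s := h6
  rw [div_le_div_iff₀ hts (by linarith : (0:ℝ) < s - 1)]
  have h8 : (u^(1-s)-t^(1-s))*t^s = u^(1-s)*t^s - t := by rw [sub_mul, hkey2]
  linarith

/-- Kronecker's lemma over `Icc 1 n` sums. -/
lemma lw_kronecker {a b : ℕ → ℝ} {L : ℝ} (ha0 : ∀ n, 0 < a n) (hamono : Monotone a)
    (hatop : Tendsto a atTop atTop)
    (hT : Tendsto (fun n => ∑ i ∈ Finset.Icc 1 n, b i) atTop (nhds L)) :
    Tendsto (fun n => (∑ i ∈ Finset.Icc 1 n, a i * b i) / a n) atTop (nhds 0) := by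
  set T : ℕ → ℝ := fun n => ∑ i ∈ Finset.Icc 1 n, b i with hTdef
  have habel : ∀ n, ∑ i ∈ Finset.Icc 1 n, a i * b i
      = a n * T n - ∑ i ∈ Finset.range n, (a (i+1) - a i) * T i := by
    intro n
    induction n with
    | zero => simp [hTdef]
    | succ n ih =>
      rw [Finset.sum_Icc_succ_top (Nat.one_le_iff_ne_zero.2 (Nat.succ_ne_zero n)), ih,
        Finset.sum_range_succ]
      have hTs : T (n+1) = T n + b (n+1) :=
        Finset.sum_Icc_succ_top (Nat.one_le_iff_ne_zero.2 (Nat.succ_ne_zero n)) _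
      rw [hTs]; ring
  have hc : ∀ i, 0 ≤ a (i+1) - a i := fun i => sub_nonneg.2 (hamono (Nat.le_succ i))
  have hcsum : ∀ n, ∑ i ∈ Finset.range n, (a (i+1) - a i) = a n - a 0 :=
    fun n => Finset.sum_range_sub a n
  have hcsumtop : Tendsto (fun n => ∑ i ∈ Finset.range n, (a (i+1) - a i)) atTop atTop := by
    simp only [hcsum]
    exact tendsto_atTop_add_const_right _ _ hatop
  have hlittle : (fun i => (a (i+1) - a i) * (T i - L)) =o[atTop] (fun i => a (i+1) - a i) := by
    rw [Asymptotics.isLittleO_iff]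
    intro ε hε
    filter_upwards [(tendsto_sub_nhds_zero_iff.2 hT).eventually
      (Metric.ball_mem_nhds (0:ℝ) hε)] with i hi
    rw [Real.dist_eq, sub_zero] at hi
    rw [Real.norm_eq_abs, Real.norm_eq_abs, abs_mul]
    calc |a (i+1) - a i| * |T i - L| ≤ |a (i+1) - a i| * ε :=
          mul_le_mul_of_nonneg_left hi.le (abs_nonneg _)
      _ = ε * |a (i+1) - a i| := mul_comm _ _
  have hsum := hlittle.sum_range hc hcsumtop
  have hbigO : (fun n => ∑ i ∈ Finset.range n, (a (i+1) - a i)) =O[atTop] a := by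
    apply Asymptotics.isBigO_of_le
    intro n
    rw [hcsum, Real.norm_eq_abs, Real.norm_eq_abs]
    have h1 : a 0 ≤ a n := hamono (Nat.zero_le n)
    have h2 : 0 < a 0 := ha0 0
    rw [abs_of_nonneg (by linarith), abs_of_nonneg (ha0 n).le]
    linarith
  have hlittle2 : (fun n => ∑ i ∈ Finset.range n, (a (i+1) - a i) * (T i - L)) =o[atTop] a :=
    hsum.trans_isBigO hbigO
  have hdiv : Tendsto (fun n => (∑ i ∈ Finset.range n, (a (i+1) - a i) * (T i - L)) / a n)
      atTop (nhds 0) := hlittle2.tendsto_div_nhds_zero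
  have hainv : Tendsto (fun n => (a n)⁻¹) atTop (nhds 0) := hatop.inv_tendsto_atTop
  have heq : ∀ n, (∑ i ∈ Finset.Icc 1 n, a i * b i) / a n
      = T n - L - (∑ i ∈ Finset.range n, (a (i+1) - a i) * (T i - L)) / a n
        + (a 0 * L) * (a n)⁻¹ := by
    intro n
    have hne : a n ≠ 0 := (ha0 n).ne'
    have hsplit : ∑ i ∈ Finset.range n, (a (i+1) - a i) * T i
        = ∑ i ∈ Finset.range n, (a (i+1) - a i) * (T i - L) + (a n - a 0) * L := by
      rw [← hcsum n, Finset.sum_mul, ← Finset.sum_add_distrib]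
      congr 1; ext i; ring
    rw [habel n, hsplit]
    field_simp
    ring
  have hfin : Tendsto (fun n => T n - L
        - (∑ i ∈ Finset.range n, (a (i+1) - a i) * (T i - L)) / a n
        + (a 0 * L) * (a n)⁻¹) atTop (nhds (L - L - 0 + a 0 * L * 0)) :=
    (((hT.sub_const L).sub hdiv).add ((tendsto_const_nhds).mul hainv))
  simp only [sub_self, zero_sub, mul_zero, add_zero, neg_zero, sub_zero] at hfin
  exact Tendsto.congr (fun n => (heq n).symm) hfin


lemma lw_Icc_range {M : Type*} [AddCommMonoid M] (f : ℕ → M) (n : ℕ) :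
    ∑ i ∈ Finset.Icc 1 n, f i = ∑ k ∈ Finset.range n, f (k+1) := by
  induction n with
  | zero => simp
  | succ n ih => rw [Finset.sum_Icc_succ_top (by omega), Finset.sum_range_succ, ih]

lemma lw_series_bound {d : ℕ → ℝ} (hd : ∀ i, 0 ≤ d i) {η : ℝ} (hη : 1/2 < η) (n : ℕ) :
    ∑ i ∈ Finset.Icc 1 n,
      d i / (max (∑ j ∈ Finset.Icc 1 i, d j) (Real.exp 1)
        * Real.log (max (∑ j ∈ Finset.Icc 1 i, d j) (Real.exp 1)) ^ (2*η))
      ≤ (2*η - 1)⁻¹ + Real.exp 1 := by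
  set V : ℕ → ℝ := fun i => ∑ j ∈ Finset.Icc 1 i, d j with hV
  set m : ℕ → ℝ := fun i => max (V i) (Real.exp 1) with hm
  set t : ℕ → ℝ := fun i => Real.log (m i) with ht
  have hs : 1 < 2 * η := by linarith
  have hVnonneg : ∀ i, 0 ≤ V i := fun i => Finset.sum_nonneg fun j _ => hd j
  have hVsucc : ∀ k, V (k+1) = V k + d (k+1) := fun k =>
    Finset.sum_Icc_succ_top (by omega) _
  have hVmono : Monotone V := monotone_nat_of_le_succ fun k => by rw [hVsucc]; linarith [hd (k+1)]
  have hme : ∀ i, Real.exp 1 ≤ m i := fun i => le_max_right _ _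
  have hmpos : ∀ i, 0 < m i := fun i => lt_of_lt_of_le (Real.exp_pos 1) (hme i)
  have hm1 : ∀ i, 1 ≤ m i := fun i =>
    le_trans (by linarith [Real.add_one_le_exp (1:ℝ)]) (hme i)
  have hmmono : Monotone m := fun a b hab => max_le_max (hVmono hab) le_rfl
  have ht1 : ∀ i, 1 ≤ t i := fun i => by
    have := Real.log_le_log (Real.exp_pos 1) (hme i)
    rwa [Real.log_exp] at this
  have htmono : Monotone t := fun a b hab => Real.log_le_log (hmpos a) (hmmono hab)
  have hm0 : m 0 = Real.exp 1 := by
    have : V 0 = 0 := by simp [hV]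
    rw [hm]; simp [this, max_eq_right (Real.exp_pos 1).le]
  have ht0 : t 0 = 1 := by rw [ht]; simp only [hm0, Real.log_exp]
  have hΔle : ∀ k, m (k+1) - m k ≤ d (k+1) := by
    intro k
    have h1 : m (k+1) ≤ m k + d (k+1) := by
      rw [hm]
      simp only
      apply max_le
      · rw [hVsucc]
        exact add_le_add (le_max_left _ _) le_rfl
      · exact le_add_of_le_of_nonneg (le_max_right _ _) (hd (k+1))
    linarith
  have hΔ0 : ∀ k, 0 ≤ m (k+1) - m k := fun k => sub_nonneg.2 (hmmono (Nat.le_succ k))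
  -- per-term bound
  have hterm : ∀ k, d (k+1) / (m (k+1) * t (k+1) ^ (2*η))
      ≤ (t k ^ (1-2*η) - t (k+1) ^ (1-2*η)) / (2*η-1) + (d (k+1) - (m (k+1) - m k)) := by
    intro k
    have htp : (0:ℝ) < t (k+1) ^ (2*η) :=
      Real.rpow_pos_of_pos (lt_of_lt_of_le one_pos (ht1 (k+1))) _
    have htp1 : (1:ℝ) ≤ t (k+1) ^ (2*η) := Real.one_le_rpow (ht1 (k+1)) (by linarith)
    have hD1 : (1:ℝ) ≤ m (k+1) * t (k+1) ^ (2*η) := by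
      have h := mul_le_mul (hm1 (k+1)) htp1 zero_le_one (le_trans zero_le_one (hm1 (k+1)))
      simpa using h
    have hDpos : (0:ℝ) < m (k+1) * t (k+1) ^ (2*η) := mul_pos (hmpos _) htp
    have hsplit : d (k+1) / (m (k+1) * t (k+1) ^ (2*η))
        = (m (k+1) - m k) / (m (k+1) * t (k+1) ^ (2*η))
          + (d (k+1) - (m (k+1) - m k)) / (m (k+1) * t (k+1) ^ (2*η)) := by
      rw [← add_div]
      ring_nf
    rw [hsplit]
    have h2 : (d (k+1) - (m (k+1) - m k)) / (m (k+1) * t (k+1) ^ (2*η))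
        ≤ d (k+1) - (m (k+1) - m k) := div_le_self (by linarith [hΔle k]) hD1
    have h3 : (m (k+1) - m k) / (m (k+1) * t (k+1) ^ (2*η))
        ≤ (t k ^ (1-2*η) - t (k+1) ^ (1-2*η)) / (2*η-1) := by
      have hlog : (m (k+1) - m k) / m (k+1) ≤ t (k+1) - t k := by
        have := lw_log_lb (hmpos k) (hmmono (Nat.le_succ k))
        exact this
      calc (m (k+1) - m k) / (m (k+1) * t (k+1) ^ (2*η))
          = ((m (k+1) - m k) / m (k+1)) / t (k+1) ^ (2*η) := by rw [div_div]
        _ ≤ (t (k+1) - t k) / t (k+1) ^ (2*η) := by gcongr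
        _ ≤ (t k ^ (1-2*η) - t (k+1) ^ (1-2*η)) / (2*η-1) :=
            lw_rpow_telescope hs (ht1 k) (htmono (Nat.le_succ k))
    linarith
  calc ∑ i ∈ Finset.Icc 1 n, d i / (m i * t i ^ (2*η))
      = ∑ k ∈ Finset.range n, d (k+1) / (m (k+1) * t (k+1) ^ (2*η)) :=
        lw_Icc_range _ n
    _ ≤ ∑ k ∈ Finset.range n, ((t k ^ (1-2*η) - t (k+1) ^ (1-2*η)) / (2*η-1)
          + (d (k+1) - (m (k+1) - m k))) :=
        Finset.sum_le_sum fun k _ => hterm k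
    _ = (∑ k ∈ Finset.range n, (t k ^ (1-2*η) - t (k+1) ^ (1-2*η))) / (2*η-1)
          + (∑ k ∈ Finset.range n, d (k+1) - ∑ k ∈ Finset.range n, (m (k+1) - m k)) := by
        rw [Finset.sum_add_distrib, Finset.sum_div, Finset.sum_sub_distrib]
    _ ≤ (2*η-1)⁻¹ + Real.exp 1 := by
        have e1 : ∑ k ∈ Finset.range n, (t k ^ (1-2*η) - t (k+1) ^ (1-2*η))
            = t 0 ^ (1-2*η) - t n ^ (1-2*η) := Finset.sum_range_sub' _ n
        have e2 : ∑ k ∈ Finset.range n, (m (k+1) - m k) = m n - m 0 :=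
          Finset.sum_range_sub m n
        have e3 : ∑ k ∈ Finset.range n, d (k+1) = V n := (lw_Icc_range d n).symm
        rw [e1, e2, e3, ht0, Real.one_rpow]
        have h4 : (1 - t n ^ (1-2*η)) / (2*η-1) ≤ (2*η-1)⁻¹ := by
          rw [div_le_iff₀ (by linarith : (0:ℝ) < 2*η-1)]
          have := Real.rpow_nonneg (le_trans zero_le_one (ht1 n)) (1-2*η)
          rw [inv_mul_cancel₀ (by linarith : (2*η-1) ≠ 0)]
          linarith
        have h5 : V n - (m n - m 0) ≤ Real.exp 1 := by
          have := le_max_left (V n) (Real.exp 1)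
          rw [hm0]
          have hVm : V n ≤ m n := le_max_left _ _
          linarith
        linarith



noncomputable def lwA (d : ℕ → ℝ) (η : ℝ) (n : ℕ) : ℝ :=
  (max (∑ i ∈ Finset.Icc 1 n, d i) (Real.exp 1)) ^ ((1:ℝ)/2)
    * Real.log (max (∑ i ∈ Finset.Icc 1 n, d i) (Real.exp 1)) ^ η

lemma lw_exp_le_max (x : ℝ) : Real.exp 1 ≤ max x (Real.exp 1) := le_max_right _ _

lemma lw_max_pos (x : ℝ) : 0 < max x (Real.exp 1) :=
  lt_of_lt_of_le (Real.exp_pos 1) (lw_exp_le_max x)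

lemma lw_one_le_log_max (x : ℝ) : 1 ≤ Real.log (max x (Real.exp 1)) := by
  have := Real.log_le_log (Real.exp_pos 1) (lw_exp_le_max x)
  rwa [Real.log_exp] at this

lemma lwA_pos {d : ℕ → ℝ} {η : ℝ} (n : ℕ) : 0 < lwA d η n := by
  unfold lwA
  exact mul_pos (Real.rpow_pos_of_pos (lw_max_pos _) _)
    (Real.rpow_pos_of_pos (lt_of_lt_of_le one_pos (lw_one_le_log_max _)) _)

lemma lw_V_mono {d : ℕ → ℝ} (hd : ∀ i, 0 ≤ d i) :
    Monotone (fun n => ∑ i ∈ Finset.Icc 1 n, d i) := fun a b hab =>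
  Finset.sum_le_sum_of_subset_of_nonneg (Finset.Icc_subset_Icc_right hab) fun k _ _ => hd k

lemma lwA_mono {d : ℕ → ℝ} (hd : ∀ i, 0 ≤ d i) {η : ℝ} (hη : 0 ≤ η) :
    Monotone (lwA d η) := by
  intro a b hab
  unfold lwA
  have hmax : max (∑ i ∈ Finset.Icc 1 a, d i) (Real.exp 1)
      ≤ max (∑ i ∈ Finset.Icc 1 b, d i) (Real.exp 1) :=
    max_le_max (lw_V_mono hd hab) le_rfl
  refine mul_le_mul (Real.rpow_le_rpow (lw_max_pos _).le hmax (by norm_num))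
    (Real.rpow_le_rpow (le_trans zero_le_one (lw_one_le_log_max _))
      (Real.log_le_log (lw_max_pos _) hmax) hη)
    (Real.rpow_nonneg (le_trans zero_le_one (lw_one_le_log_max _)) _)
    (Real.rpow_nonneg (lw_max_pos _).le _)

lemma lwA_tendsto {d : ℕ → ℝ} {η : ℝ} (hη : 0 ≤ η)
    (h : Tendsto (fun n => ∑ i ∈ Finset.Icc 1 n, d i) atTop atTop) :
    Tendsto (lwA d η) atTop atTop := by
  have h1 : Tendsto (fun n => (max (∑ i ∈ Finset.Icc 1 n, d i) (Real.exp 1)) ^ ((1:ℝ)/2))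
      atTop atTop :=
    (tendsto_rpow_atTop (by norm_num : (0:ℝ) < 1/2)).comp
      (tendsto_atTop_mono (fun n => le_max_left _ _) h)
  refine tendsto_atTop_mono (fun n => ?_) h1
  unfold lwA
  exact le_mul_of_one_le_right (Real.rpow_nonneg (lw_max_pos _).le _)
    (Real.one_le_rpow (lw_one_le_log_max _) hη)

lemma lwA_sq {d : ℕ → ℝ} {η : ℝ} (n : ℕ) :
    (lwA d η n) ^ 2 = max (∑ i ∈ Finset.Icc 1 n, d i) (Real.exp 1)
      * Real.log (max (∑ i ∈ Finset.Icc 1 n, d i) (Real.exp 1)) ^ (2*η) := by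
  unfold lwA
  rw [mul_pow, ← Real.rpow_natCast ((max (∑ i ∈ Finset.Icc 1 n, d i) (Real.exp 1)) ^ ((1:ℝ)/2)) 2,
    ← Real.rpow_natCast ((Real.log (max (∑ i ∈ Finset.Icc 1 n, d i) (Real.exp 1))) ^ η) 2,
    ← Real.rpow_mul (lw_max_pos _).le,
    ← Real.rpow_mul (le_trans zero_le_one (lw_one_le_log_max _))]
  have e1 : (1:ℝ)/2 * ((2:ℕ):ℝ) = 1 := by push_cast; ring
  have e2 : η * ((2:ℕ):ℝ) = 2*η := by push_cast; ring
  rw [e1, e2, Real.rpow_one]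

lemma lw_sum_div_lwA_sq {d : ℕ → ℝ} (hd : ∀ i, 0 ≤ d i) {η : ℝ} (hη : 1/2 < η) (n : ℕ) :
    ∑ i ∈ Finset.Icc 1 n, d i / (lwA d η i) ^ 2 ≤ (2*η - 1)⁻¹ + Real.exp 1 := by
  calc ∑ i ∈ Finset.Icc 1 n, d i / (lwA d η i) ^ 2
      = ∑ i ∈ Finset.Icc 1 n,
        d i / (max (∑ j ∈ Finset.Icc 1 i, d j) (Real.exp 1)
          * Real.log (max (∑ j ∈ Finset.Icc 1 i, d j) (Real.exp 1)) ^ (2*η)) :=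
        Finset.sum_congr rfl fun i _ => by rw [lwA_sq]
    _ ≤ (2*η - 1)⁻¹ + Real.exp 1 := lw_series_bound hd hη n


lemma lw_int_mul {Ω : Type*} {mΩ : MeasurableSpace Ω} {P : Measure Ω} {f g : Ω → ℝ}
    (hf : MemLp f 2 P) (hg : MemLp g 2 P) :
    Integrable (fun ω => f ω * g ω) P := by
  exact MemLp.integrable_mul hf hg

lemma lw_core {Ω : Type*} {mΩ : MeasurableSpace Ω} (ℱ : Filtration ℕ mΩ)
    (P : Measure Ω) [IsProbabilityMeasure P]
    (ε : ℕ → Ω → ℝ)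
    (hadapt : ∀ n, StronglyMeasurable[ℱ n] (ε n))
    (hL2 : ∀ n, MemLp (ε n) 2 P)
    (hmart : ∀ n : ℕ, ∀ᵐ ω ∂P, (P[ε (n + 1) | ℱ n]) ω = 0)
    (w : ℕ → Ω → ℝ)
    (hw : ∀ n : ℕ, StronglyMeasurable[ℱ n] (w (n + 1)))
    (A : ℕ → Set Ω) (hAm : ∀ n, MeasurableSet[ℱ n] (A (n + 1)))
    (hAsub : ∀ i j : ℕ, j ≤ i → A i ⊆ A j)
    (M K : ℝ) (hM : 0 ≤ M) (hK : 0 ≤ K)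
    (hAbound : ∀ i ω, ω ∈ A (i+1) → ∑ j ∈ Finset.Icc 1 (i+1), w j ω ^ 2 ≤ M)
    (hAcond : ∀ i ω, ω ∈ A (i+1) → (P[fun ω' => ε (i+1) ω' ^ 2 | ℱ i]) ω ≤ K) :
    ∀ᵐ ω ∂P, ∃ L : ℝ,
      Tendsto (fun n : ℕ => ∑ i ∈ Finset.Icc 1 n, (A i).indicator (w i) ω * ε i ω)
        atTop (nhds L) := by
  classical
  set W : ℕ → Ω → ℝ := fun i => (A i).indicator (w i) with hWdef
  set g : ℕ → Ω → ℝ := fun n ω => ∑ i ∈ Finset.Icc 1 n, W i ω * ε i ω with hgdef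
  -- measurability of W
  have hWm : ∀ n, StronglyMeasurable[ℱ n] (W (n+1)) := fun n =>
    (hw n).indicator (hAm n)
  have hWm0 : ∀ n, StronglyMeasurable (W (n+1)) := fun n => (hWm n).mono (ℱ.le n)
  -- partial sums of W² are bounded by M
  have hWsq : ∀ n ω, ∑ i ∈ Finset.Icc 1 n, W i ω ^ 2 ≤ M := by
    intro n
    induction n with
    | zero => intro ω; simpa using hM
    | succ n ih =>
      intro ω
      by_cases hmem : ω ∈ A (n+1)
      · have : ∀ i ∈ Finset.Icc 1 (n+1), W i ω ^ 2 = w i ω ^ 2 := by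
          intro i hi
          rw [Finset.mem_Icc] at hi
          rw [hWdef]
          simp only
          rw [Set.indicator_of_mem (hAsub (n+1) i hi.2 hmem)]
        rw [Finset.sum_congr rfl this]
        exact hAbound n ω hmem
      · rw [Finset.sum_Icc_succ_top (by omega)]
        have : W (n+1) ω = 0 := Set.indicator_of_notMem hmem _
        rw [this]
        simpa using ih ω
  -- single W bound
  have hWb : ∀ n ω, |W (n+1) ω| ≤ Real.sqrt M := by
    intro n ω
    have h1 : W (n+1) ω ^ 2 ≤ M := by
      refine le_trans (Finset.single_le_sum (f := fun i => W i ω ^ 2)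
        (fun i _ => sq_nonneg _) (Finset.mem_Icc.2 ⟨by omega, le_rfl⟩)) (hWsq (n+1) ω)
    calc |W (n+1) ω| = Real.sqrt (W (n+1) ω ^ 2) := (Real.sqrt_sq_eq_abs _).symm
      _ ≤ Real.sqrt M := Real.sqrt_le_sqrt h1
  -- L² membership of increments
  have hu : ∀ n, MemLp (fun ω => W (n+1) ω * ε (n+1) ω) 2 P := by
    intro n
    refine MemLp.of_le_mul (c := Real.sqrt M) (hL2 (n+1))
      ((hWm0 n).aestronglyMeasurable.mul ((hadapt (n+1)).mono (ℱ.le _)).aestronglyMeasurable)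
      (Eventually.of_forall fun ω => ?_)
    rw [norm_mul]
    exact mul_le_mul_of_nonneg_right (by simpa [Real.norm_eq_abs] using hWb n ω) (norm_nonneg _)
  have hgL2 : ∀ n, MemLp (g n) 2 P := by
    intro n
    apply memLp_finset_sum
    intro i hi
    rw [Finset.mem_Icc] at hi
    obtain ⟨k, rfl⟩ : ∃ k, i = k + 1 := ⟨i - 1, by omega⟩
    exact hu k
  have hgInt : ∀ n, Integrable (g n) P := fun n => (hgL2 n).integrable one_le_two
  have hgAdapted : StronglyAdapted ℱ g := by
    intro n
    apply Finset.stronglyMeasurable_fun_sum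
    intro i hi
    rw [Finset.mem_Icc] at hi
    obtain ⟨k, rfl⟩ : ∃ k, i = k + 1 := ⟨i - 1, by omega⟩
    exact ((hWm k).mono (ℱ.mono (by omega))).mul ((hadapt (k+1)).mono (ℱ.mono (by omega)))
  have hgsucc : ∀ n ω, g (n+1) ω = g n ω + W (n+1) ω * ε (n+1) ω := fun n ω =>
    Finset.sum_Icc_succ_top (by omega) _
  -- martingale property
  have huInt : ∀ n, Integrable (fun ω => W (n+1) ω * ε (n+1) ω) P :=
    fun n => (hu n).integrable one_le_two
  have hcondu : ∀ n, (P[fun ω => W (n+1) ω * ε (n+1) ω | ℱ n]) =ᵐ[P] 0 := by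
    intro n
    have h1 : P[W (n+1) * ε (n+1) | ℱ n] =ᵐ[P] W (n+1) * P[ε (n+1) | ℱ n] :=
      condExp_mul_of_stronglyMeasurable_left (hWm n) (huInt n) ((hL2 (n+1)).integrable one_le_two)
    filter_upwards [h1, hmart n] with ω h2 h3
    simp only [Pi.mul_apply] at h2
    simp only [Pi.zero_apply]
    rw [show (fun ω => W (n+1) ω * ε (n+1) ω) = W (n+1) * ε (n+1) from rfl, h2, h3, mul_zero]
  have hmg : Martingale g ℱ P := by
    apply martingale_nat hgAdapted hgInt
    intro n
    have heq : g (n+1) = fun ω => g n ω + W (n+1) ω * ε (n+1) ω := funext (hgsucc n)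
    rw [heq]
    have h1 : P[(fun ω => g n ω + W (n+1) ω * ε (n+1) ω) | ℱ n]
        =ᵐ[P] P[g n | ℱ n] + P[fun ω => W (n+1) ω * ε (n+1) ω | ℱ n] :=
      condExp_add (hgInt n) (huInt n) _
    have h2 : P[g n | ℱ n] = g n :=
      condExp_of_stronglyMeasurable (ℱ.le n) (hgAdapted n) (hgInt n)
    filter_upwards [h1, hcondu n] with ω hω1 hω2
    rw [hω1]
    simp only [Pi.add_apply, hω2, Pi.zero_apply, add_zero, h2]
  -- second moment bound
  have hWsqInt : ∀ n, Integrable (fun ω => W (n+1) ω ^ 2) P := by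
    intro n
    have hm : AEStronglyMeasurable (fun ω => W (n+1) ω ^ 2) P :=
      (((hWm0 n).measurable.pow_const 2).stronglyMeasurable).aestronglyMeasurable
    have hb : ∀ᵐ ω ∂P, ‖W (n+1) ω ^ 2‖ ≤ M := by
      refine Eventually.of_forall fun ω => ?_
      rw [Real.norm_eq_abs, abs_of_nonneg (sq_nonneg _)]
      calc W (n+1) ω ^ 2 ≤ ∑ i ∈ Finset.Icc 1 (n+1), W i ω ^ 2 :=
            Finset.single_le_sum (f := fun i => W i ω ^ 2) (fun i _ => sq_nonneg _)
              (Finset.mem_Icc.2 ⟨by omega, le_rfl⟩)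
        _ ≤ M := hWsq (n+1) ω
    exact memLp_one_iff_integrable.1
      ((memLp_top_of_bound hm M hb).mono_exponent le_top)
  have hcross : ∀ n, ∫ ω, g n ω * (W (n+1) ω * ε (n+1) ω) ∂P = 0 := by
    intro n
    set b : Ω → ℝ := fun ω => g n ω * W (n+1) ω with hbdef
    have hbm : StronglyMeasurable[ℱ n] b := (hgAdapted n).mul (hWm n)
    have hbL2 : MemLp b 2 P := by
      refine MemLp.of_le_mul (c := Real.sqrt M) (hgL2 n)
        ((hbm.mono (ℱ.le n)).aestronglyMeasurable)
        (Eventually.of_forall fun ω => ?_)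
      rw [hbdef]
      simp only [Real.norm_eq_abs, abs_mul]
      rw [mul_comm (Real.sqrt M) _]
      exact mul_le_mul_of_nonneg_left (by simpa using hWb n ω) (abs_nonneg _)
    have hbe : Integrable (b * ε (n+1)) P := lw_int_mul hbL2 (hL2 (n+1))
    have h0 : ∀ ω, g n ω * (W (n+1) ω * ε (n+1) ω) = b ω * ε (n+1) ω := by
      intro ω; rw [hbdef]; ring
    rw [integral_congr_ae (Eventually.of_forall h0)]
    have h1 : ∫ ω, (P[b * ε (n+1) | ℱ n]) ω ∂P = ∫ ω, b ω * ε (n+1) ω ∂P :=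
      integral_condExp (ℱ.le n)
    have h2 : P[b * ε (n+1) | ℱ n] =ᵐ[P] b * P[ε (n+1) | ℱ n] :=
      condExp_mul_of_stronglyMeasurable_left hbm hbe ((hL2 (n+1)).integrable one_le_two)
    have h3 : (b * P[ε (n+1) | ℱ n]) =ᵐ[P] (0 : Ω → ℝ) := by
      filter_upwards [hmart n] with ω hω
      simp [hω]
    calc ∫ ω, b ω * ε (n+1) ω ∂P = ∫ ω, (P[b * ε (n+1) | ℱ n]) ω ∂P := h1.symm
      _ = ∫ ω, (0:ℝ) ∂P := integral_congr_ae (h2.trans h3)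
      _ = 0 := integral_zero _ _
  have husq : ∀ n, ∫ ω, (W (n+1) ω * ε (n+1) ω) ^ 2 ∂P ≤ K * ∫ ω, W (n+1) ω ^ 2 ∂P := by
    intro n
    set q : Ω → ℝ := fun ω => W (n+1) ω ^ 2 with hqdef
    have hqm : StronglyMeasurable[ℱ n] q := ((hWm n).measurable.pow_const 2).stronglyMeasurable
    have hqb : ∀ ω, ‖q ω‖ ≤ M := by
      intro ω
      rw [hqdef, Real.norm_eq_abs, abs_of_nonneg (sq_nonneg _)]
      calc W (n+1) ω ^ 2 ≤ ∑ i ∈ Finset.Icc 1 (n+1), W i ω ^ 2 :=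
            Finset.single_le_sum (f := fun i => W i ω ^ 2) (fun i _ => sq_nonneg _)
              (Finset.mem_Icc.2 ⟨by omega, le_rfl⟩)
        _ ≤ M := hWsq (n+1) ω
    have hε2 : Integrable (fun ω => ε (n+1) ω ^ 2) P := (hL2 (n+1)).integrable_sq
    have hqε2 : Integrable (q * fun ω => ε (n+1) ω ^ 2) P :=
      hε2.bdd_mul ((hqm.mono (ℱ.le n)).aestronglyMeasurable) (Eventually.of_forall hqb)
    have h0 : ∀ ω, (W (n+1) ω * ε (n+1) ω) ^ 2 = q ω * ε (n+1) ω ^ 2 := by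
      intro ω; rw [hqdef]; ring
    rw [integral_congr_ae (Eventually.of_forall h0)]
    have h1 : ∫ ω, q ω * ε (n+1) ω ^ 2 ∂P
        = ∫ ω, (P[q * fun ω' => ε (n+1) ω' ^ 2 | ℱ n]) ω ∂P :=
      (integral_condExp (ℱ.le n)).symm
    have h2 : P[q * fun ω' => ε (n+1) ω' ^ 2 | ℱ n]
        =ᵐ[P] q * P[fun ω' => ε (n+1) ω' ^ 2 | ℱ n] :=
      condExp_mul_of_stronglyMeasurable_left hqm hqε2 hε2
    have hqcInt : Integrable (fun ω => q ω * (P[fun ω' => ε (n+1) ω' ^ 2 | ℱ n]) ω) P :=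
      integrable_condExp.bdd_mul ((hqm.mono (ℱ.le n)).aestronglyMeasurable) (Eventually.of_forall hqb)
    have hpoint : ∀ ω, q ω * (P[fun ω' => ε (n+1) ω' ^ 2 | ℱ n]) ω ≤ K * q ω := by
      intro ω
      by_cases hmem : ω ∈ A (n+1)
      · have hc := hAcond n ω hmem
        have hq0 : 0 ≤ q ω := sq_nonneg _
        calc q ω * (P[fun ω' => ε (n+1) ω' ^ 2 | ℱ n]) ω ≤ q ω * K :=
              mul_le_mul_of_nonneg_left hc hq0
          _ = K * q ω := mul_comm _ _
      · have : W (n+1) ω = 0 := Set.indicator_of_notMem hmem _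
        rw [hqdef]
        simp [this]
    calc ∫ ω, q ω * ε (n+1) ω ^ 2 ∂P
        = ∫ ω, (P[q * fun ω' => ε (n+1) ω' ^ 2 | ℱ n]) ω ∂P := h1
      _ = ∫ ω, q ω * (P[fun ω' => ε (n+1) ω' ^ 2 | ℱ n]) ω ∂P := by
          refine integral_congr_ae (h2.mono fun ω hω => ?_)
          rw [hω]; rfl
      _ ≤ ∫ ω, K * q ω ∂P :=
          integral_mono hqcInt ((hWsqInt n).const_mul K) hpoint
      _ = K * ∫ ω, q ω ∂P := integral_const_mul _ _
  -- ∫ g n ² ≤ K * M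
  have hgsq : ∀ n, ∫ ω, g n ω ^ 2 ∂P ≤ K * ∑ i ∈ Finset.Icc 1 n, ∫ ω, W i ω ^ 2 ∂P := by
    intro n
    induction n with
    | zero => simp [hgdef]
    | succ n ih =>
      have hexp : ∀ ω, g (n+1) ω ^ 2
          = g n ω ^ 2 + (2 * (g n ω * (W (n+1) ω * ε (n+1) ω)) + (W (n+1) ω * ε (n+1) ω) ^ 2) := by
        intro ω; rw [hgsucc n ω]; ring
      have hI1 : Integrable (fun ω => g n ω ^ 2) P := (hgL2 n).integrable_sq
      have hI2 : Integrable (fun ω => g n ω * (W (n+1) ω * ε (n+1) ω)) P :=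
        lw_int_mul (hgL2 n) (hu n)
      have hI3 : Integrable (fun ω => (W (n+1) ω * ε (n+1) ω) ^ 2) P := (hu n).integrable_sq
      have hI2' : Integrable (fun ω => 2 * (g n ω * (W (n+1) ω * ε (n+1) ω))) P :=
        hI2.const_mul 2
      have hI23 : Integrable (fun ω => 2 * (g n ω * (W (n+1) ω * ε (n+1) ω))
          + (W (n+1) ω * ε (n+1) ω) ^ 2) P := hI2'.add hI3
      have heq2 : ∫ ω, g (n+1) ω ^ 2 ∂P
          = ∫ ω, g n ω ^ 2 ∂P + (2 * ∫ ω, g n ω * (W (n+1) ω * ε (n+1) ω) ∂P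
            + ∫ ω, (W (n+1) ω * ε (n+1) ω) ^ 2 ∂P) := by
        rw [integral_congr_ae (Eventually.of_forall hexp),
          integral_add hI1 hI23, integral_add hI2' hI3, integral_const_mul]
      rw [heq2, hcross n, mul_zero, zero_add]
      rw [Finset.sum_Icc_succ_top (by omega : (1:ℕ) ≤ n + 1)]
      calc ∫ ω, g n ω ^ 2 ∂P + ∫ ω, (W (n+1) ω * ε (n+1) ω) ^ 2 ∂P
          ≤ K * ∑ i ∈ Finset.Icc 1 n, ∫ ω, W i ω ^ 2 ∂P + K * ∫ ω, W (n+1) ω ^ 2 ∂P :=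
            add_le_add ih (husq n)
        _ = K * (∑ i ∈ Finset.Icc 1 n, ∫ ω, W i ω ^ 2 ∂P + ∫ ω, W (n+1) ω ^ 2 ∂P) := by ring
  have hIb : ∀ n, ∫ ω, g n ω ^ 2 ∂P ≤ K * M := by
    intro n
    refine le_trans (hgsq n) (mul_le_mul_of_nonneg_left ?_ hK)
    have hterms : ∀ i ∈ Finset.Icc 1 n, Integrable (fun ω => W i ω ^ 2) P := by
      intro i hi
      rw [Finset.mem_Icc] at hi
      obtain ⟨k, rfl⟩ : ∃ k, i = k + 1 := ⟨i - 1, by omega⟩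
      exact hWsqInt k
    have hsumInt : Integrable (fun ω => ∑ i ∈ Finset.Icc 1 n, W i ω ^ 2) P :=
      integrable_finset_sum _ hterms
    have h1 : ∑ i ∈ Finset.Icc 1 n, ∫ ω, W i ω ^ 2 ∂P
        = ∫ ω, ∑ i ∈ Finset.Icc 1 n, W i ω ^ 2 ∂P := (integral_finset_sum _ hterms).symm
    rw [h1]
    calc ∫ ω, ∑ i ∈ Finset.Icc 1 n, W i ω ^ 2 ∂P ≤ ∫ _ω, M ∂P :=
          integral_mono hsumInt (integrable_const M) (fun ω => hWsq n ω)
      _ = M := by simp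
  -- L¹ bound and convergence
  have hL1 : ∀ n, eLpNorm (g n) 1 P ≤ ((1 + K * M).toNNReal : ℝ≥0∞) := by
    intro n
    rw [eLpNorm_one_eq_lintegral_enorm, ← ofReal_integral_norm_eq_lintegral_enorm (hgInt n)]
    have hle : ∫ ω, ‖g n ω‖ ∂P ≤ 1 + K * M := by
      have hp : ∀ ω, ‖g n ω‖ ≤ 1 + g n ω ^ 2 := by
        intro ω
        rw [Real.norm_eq_abs]
        nlinarith [sq_nonneg (|g n ω| - 1), sq_abs (g n ω), abs_nonneg (g n ω)]
      calc ∫ ω, ‖g n ω‖ ∂P ≤ ∫ ω, (1 + g n ω ^ 2) ∂P :=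
            integral_mono (hgInt n).norm ((integrable_const 1).add (hgL2 n).integrable_sq) hp
        _ = 1 + ∫ ω, g n ω ^ 2 ∂P := by
            rw [integral_add (integrable_const 1) (hgL2 n).integrable_sq]
            simp
        _ ≤ 1 + K * M := by linarith [hIb n]
    exact ENNReal.ofReal_le_ofReal hle
  have conv := hmg.submartingale.exists_ae_tendsto_of_bdd hL1
  filter_upwards [conv] with ω hω
  obtain ⟨L, hL⟩ := hω
  exact ⟨L, hL⟩

section
variable {Ω : Type*} {mΩ : MeasurableSpace Ω}

def lwSet (ℱ : Filtration ℕ mΩ) (P : Measure Ω) (ε w : ℕ → Ω → ℝ) (M K : ℝ) (i : ℕ) :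
    Set Ω :=
  {ω | (∑ j ∈ Finset.Icc 1 i, w j ω ^ 2) ≤ M ∧
    ∀ m, m < i → (P[fun ω' => ε (m + 1) ω' ^ 2 | ℱ m]) ω ≤ K}

lemma lw_lemA (ℱ : Filtration ℕ mΩ)
    (P : Measure Ω) [IsProbabilityMeasure P]
    (ε : ℕ → Ω → ℝ)
    (hadapt : ∀ n, StronglyMeasurable[ℱ n] (ε n))
    (hL2 : ∀ n, MemLp (ε n) 2 P)
    (hmart : ∀ n : ℕ, ∀ᵐ ω ∂P, (P[ε (n + 1) | ℱ n]) ω = 0)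
    (hbddcond : ∀ᵐ ω ∂P,
      BddAbove (Set.range fun n : ℕ => (P[fun ω' => ε (n + 1) ω' ^ 2 | ℱ n]) ω))
    (w : ℕ → Ω → ℝ)
    (hw : ∀ n : ℕ, StronglyMeasurable[ℱ n] (w (n + 1))) :
    ∀ᵐ ω ∂P, BddAbove (Set.range fun n : ℕ => ∑ i ∈ Finset.Icc 1 n, w i ω ^ 2) →
      ∃ S : ℝ, Tendsto (fun n : ℕ => ∑ i ∈ Finset.Icc 1 n, w i ω * ε i ω) atTop (nhds S) := by
  classical
  have key : ∀ M K : ℕ, ∀ᵐ ω ∂P, ∃ L : ℝ,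
      Tendsto (fun n : ℕ => ∑ i ∈ Finset.Icc 1 n,
        (lwSet ℱ P ε w (M:ℝ) (K:ℝ) i).indicator (w i) ω * ε i ω) atTop (nhds L) := by
    intro M K
    have hAm : ∀ n, MeasurableSet[ℱ n] (lwSet ℱ P ε w (M:ℝ) (K:ℝ) (n+1)) := by
      intro n
      have hsum : StronglyMeasurable[ℱ n] (fun ω => ∑ j ∈ Finset.Icc 1 (n+1), w j ω ^ 2) := by
        apply Finset.stronglyMeasurable_fun_sum
        intro j hj
        rw [Finset.mem_Icc] at hj
        obtain ⟨k, rfl⟩ : ∃ k, j = k + 1 := ⟨j - 1, by omega⟩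
        exact (((hw k).mono (ℱ.mono (by omega))).measurable.pow_const 2).stronglyMeasurable
      have h1 : MeasurableSet[ℱ n] {ω | (∑ j ∈ Finset.Icc 1 (n+1), w j ω ^ 2) ≤ (M:ℝ)} :=
        measurableSet_le hsum.measurable measurable_const
      have h2 : MeasurableSet[ℱ n] (⋂ m ∈ Finset.range (n+1),
          {ω | (P[fun ω' => ε (m + 1) ω' ^ 2 | ℱ m]) ω ≤ (K:ℝ)}) := by
        apply Finset.measurableSet_biInter
        intro m hm
        rw [Finset.mem_range] at hm
        exact measurableSet_le
          ((stronglyMeasurable_condExp.mono (ℱ.mono (by omega))).measurable) measurable_const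
      have heq : lwSet ℱ P ε w (M:ℝ) (K:ℝ) (n+1)
          = {ω | (∑ j ∈ Finset.Icc 1 (n+1), w j ω ^ 2) ≤ (M:ℝ)} ∩ ⋂ m ∈ Finset.range (n+1),
            {ω | (P[fun ω' => ε (m + 1) ω' ^ 2 | ℱ m]) ω ≤ (K:ℝ)} := by
        ext ω
        simp only [lwSet, Set.mem_setOf_eq, Set.mem_inter_iff, Set.mem_iInter,
          Finset.mem_range]
      rw [heq]
      exact h1.inter h2
    have hAsub : ∀ i j : ℕ, j ≤ i → lwSet ℱ P ε w (M:ℝ) (K:ℝ) i ⊆ lwSet ℱ P ε w (M:ℝ) (K:ℝ) j := by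
      intro i j hji ω hω
      obtain ⟨h1, h2⟩ := hω
      refine ⟨le_trans ?_ h1, fun m hm => h2 m (lt_of_lt_of_le hm hji)⟩
      exact Finset.sum_le_sum_of_subset_of_nonneg (Finset.Icc_subset_Icc_right hji)
        (fun k _ _ => sq_nonneg _)
    exact lw_core ℱ P ε hadapt hL2 hmart w hw _ hAm hAsub (M:ℝ) (K:ℝ)
      (Nat.cast_nonneg M) (Nat.cast_nonneg K)
      (fun i ω hω => hω.1) (fun i ω hω => hω.2 i (by omega))
  have hall : ∀ᵐ ω ∂P, ∀ M K : ℕ, ∃ L : ℝ,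
      Tendsto (fun n : ℕ => ∑ i ∈ Finset.Icc 1 n,
        (lwSet ℱ P ε w (M:ℝ) (K:ℝ) i).indicator (w i) ω * ε i ω) atTop (nhds L) := by
    rw [ae_all_iff]
    intro M
    rw [ae_all_iff]
    intro K
    exact key M K
  filter_upwards [hall, hbddcond] with ω hω hbdd hBddV
  obtain ⟨Mr, hMr⟩ := hBddV
  obtain ⟨M, hM⟩ := exists_nat_ge Mr
  obtain ⟨Kr, hKr⟩ := hbdd
  obtain ⟨K, hK⟩ := exists_nat_ge Kr
  obtain ⟨L, hL⟩ := hω M K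
  refine ⟨L, ?_⟩
  have hmem : ∀ i, ω ∈ lwSet ℱ P ε w (M:ℝ) (K:ℝ) i := by
    intro i
    constructor
    · exact le_trans (hMr (Set.mem_range_self i)) hM
    · intro m _
      exact le_trans (hKr (Set.mem_range_self m)) hK
  have heq : ∀ n, (∑ i ∈ Finset.Icc 1 n,
      (lwSet ℱ P ε w (M:ℝ) (K:ℝ) i).indicator (w i) ω * ε i ω)
      = ∑ i ∈ Finset.Icc 1 n, w i ω * ε i ω :=
    fun n => Finset.sum_congr rfl fun i _ => by rw [Set.indicator_of_mem (hmem i)]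
  exact Tendsto.congr heq hL
end


noncomputable def lwW {Ω : Type*} (v : ℕ → Ω → ℝ) (η : ℝ) (i : ℕ) (ω : Ω) : ℝ :=
  v i ω / lwA (fun j => v j ω ^ 2) η i

theorem lai_wei_martingale_lemma
    {Ω : Type*} {mΩ : MeasurableSpace Ω} (ℱ : Filtration ℕ mΩ)
    (P : Measure Ω) [IsProbabilityMeasure P]
    (ε : ℕ → Ω → ℝ)
    (hadapt : ∀ n, StronglyMeasurable[ℱ n] (ε n))
    (hL2 : ∀ n, MemLp (ε n) 2 P)
    (hmart : ∀ n : ℕ, ∀ᵐ ω ∂P, (P[ε (n + 1) | ℱ n]) ω = 0)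
    (hbddcond : ∀ᵐ ω ∂P,
      BddAbove (Set.range fun n : ℕ => (P[fun ω' => ε (n + 1) ω' ^ 2 | ℱ n]) ω))
    (v : ℕ → Ω → ℝ)
    (hv : ∀ n : ℕ, StronglyMeasurable[ℱ n] (v (n + 1))) :
    (∀ᵐ ω ∂P,
        BddAbove (Set.range fun n : ℕ => ∑ i ∈ Finset.Icc 1 n, v i ω ^ 2) →
          ∃ S : ℝ,
            Tendsto (fun n : ℕ => ∑ i ∈ Finset.Icc 1 n, v i ω * ε i ω) atTop (nhds S)) ∧
      (∀ η : ℝ, 1 / 2 < η →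
        ∀ᵐ ω ∂P,
          ¬ BddAbove (Set.range fun n : ℕ => ∑ i ∈ Finset.Icc 1 n, v i ω ^ 2) →
            Tendsto
              (fun n : ℕ =>
                (∑ i ∈ Finset.Icc 1 n, v i ω * ε i ω) /
                  ((∑ i ∈ Finset.Icc 1 n, v i ω ^ 2) ^ ((1 : ℝ) / 2) *
                    Real.log (∑ i ∈ Finset.Icc 1 n, v i ω ^ 2) ^ η))
              atTop (nhds 0)) := by
  constructor
  · exact lw_lemA ℱ P ε hadapt hL2 hmart hbddcond v hv
  · intro η hη
    have hη0 : (0:ℝ) ≤ η := by linarith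
    have hwmeas : ∀ n : ℕ, StronglyMeasurable[ℱ n] (lwW v η (n+1)) := by
      intro n
      have hsum : Measurable[ℱ n] (fun ω => ∑ j ∈ Finset.Icc 1 (n+1), v j ω ^ 2) := by
        apply Finset.measurable_sum
        intro j hj
        rw [Finset.mem_Icc] at hj
        obtain ⟨k, rfl⟩ : ∃ k, j = k + 1 := ⟨j - 1, by omega⟩
        exact ((hv k).mono (ℱ.mono (by omega))).measurable.pow_const 2
      have hmax : Measurable[ℱ n] (fun ω => max (∑ j ∈ Finset.Icc 1 (n+1), v j ω ^ 2)
          (Real.exp 1)) := hsum.max measurable_const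
      have hden : Measurable[ℱ n] (fun ω =>
          (max (∑ j ∈ Finset.Icc 1 (n+1), v j ω ^ 2) (Real.exp 1)) ^ ((1:ℝ)/2)
            * Real.log (max (∑ j ∈ Finset.Icc 1 (n+1), v j ω ^ 2) (Real.exp 1)) ^ η) :=
        (((Real.continuous_rpow_const (by norm_num : (0:ℝ) ≤ 1/2)).measurable.comp hmax).mul
          ((Real.continuous_rpow_const hη0).measurable.comp (Real.measurable_log.comp hmax)))
      exact ((hv n).measurable.div hden).stronglyMeasurable
    filter_upwards [lw_lemA ℱ P ε hadapt hL2 hmart hbddcond (lwW v η) hwmeas]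
      with ω hconv hunbdd
    set d : ℕ → ℝ := fun i => v i ω ^ 2 with hd
    have hd0 : ∀ i, 0 ≤ d i := fun i => sq_nonneg _
    have hbddw : BddAbove (Set.range fun n : ℕ => ∑ i ∈ Finset.Icc 1 n, lwW v η i ω ^ 2) := by
      refine ⟨(2*η - 1)⁻¹ + Real.exp 1, ?_⟩
      rintro x ⟨n, rfl⟩
      have hterm : ∀ i, lwW v η i ω ^ 2 = d i / (lwA d η i) ^ 2 := by
        intro i
        simp only [lwW, div_pow]
        rfl
      calc (∑ i ∈ Finset.Icc 1 n, lwW v η i ω ^ 2)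
          = ∑ i ∈ Finset.Icc 1 n, d i / (lwA d η i) ^ 2 :=
            Finset.sum_congr rfl fun i _ => hterm i
        _ ≤ (2*η - 1)⁻¹ + Real.exp 1 := lw_sum_div_lwA_sq hd0 hη n
    obtain ⟨S, hT⟩ := hconv hbddw
    have hVtop : Tendsto (fun n => ∑ i ∈ Finset.Icc 1 n, d i) atTop atTop :=
      tendsto_atTop_atTop_of_monotone' (lw_V_mono hd0) hunbdd
    have hKr := lw_kronecker (a := lwA d η) (b := fun i => lwW v η i ω * ε i ω)
      (fun n => lwA_pos n) (lwA_mono hd0 hη0) (lwA_tendsto hη0 hVtop) hT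
    have hnum : ∀ n, ∑ i ∈ Finset.Icc 1 n, lwA d η i * (lwW v η i ω * ε i ω)
        = ∑ i ∈ Finset.Icc 1 n, v i ω * ε i ω := by
      intro n
      refine Finset.sum_congr rfl fun i _ => ?_
      have hne : lwA d η i ≠ 0 := (lwA_pos i).ne'
      simp only [lwW]
      rw [← hd]
      field_simp
    have hKr' : Tendsto (fun n => (∑ i ∈ Finset.Icc 1 n, v i ω * ε i ω) / lwA d η n)
        atTop (nhds 0) := Tendsto.congr (fun n => by rw [hnum n]) hKr
    refine Tendsto.congr' ?_ hKr'
    filter_upwards [hVtop.eventually_ge_atTop (Real.exp 1)] with n hn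
    simp only [lwA]
    rw [max_eq_left hn]
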